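/- Consider the gateway model with drift bound D ≥ 0, mixing weight β ≥ 0 and maximal delay K ≥ 1 in a real inner product space H: iterates ω : ℕ → H, a delay function ζ : ℕ → ℕ with ζ(z) ≤ z − 1 and z − ζ(z) ≤ K for all z ≥ 1, updates u : ℕ → H with ‖u(z) − ω(ζ(z))‖ ≤ D for all z ≥ 1, and update rule ω(z) = (1−β)·ω(z−1) + β·u(z) for z ≥ 1; set R(z) = ‖ω(ζ(z)) − ω(z−1)‖² for z ≥ 1 and R(z) = 0 for z ≤ 0. If 2√2·β·(K−1)^{3/2} ≤ 1, then for every positive integer Z: ∑_{z=1}^{Z} R(z) ≤ 4·Z·β²·(K−1)²·D² and ∑_{z=1}^{Z} √(R(z)) ≤ 3·Z·β·(K−1)·D. -/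

import Mathlib

private lemma asyncHFL_tele {H : Type*} [AddCommGroup H] (f : ℕ → H) (a b : ℕ) (h : a ≤ b) :
    ∑ j ∈ Finset.Ico a b, (f (j + 1) - f j) = f b - f a := by
  induction b, h using Nat.le_induction with
  | base => simp
  | succ b hb ih =>
      rw [Finset.sum_Ico_succ_top (by omega), ih]
      abel

/-- Deterministic counterpart of Lemma 5 (Sum of gateway recursion) of the
Async-HFL convergence analysis: for an asynchronous gateway with drift bound
`D`, mixing weight `β ≥ 0` and maximal delay `K`, under the step-size condition
`2√2·β·(K−1)^{3/2} ≤ 1`, the staleness residuals `R(z)` and their square roots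
have sums bounded by `4Zβ²(K−1)²D²` and `3Zβ(K−1)D` respectively. -/
theorem asyncHFL_sum_of_gateway_recursion
    {H : Type*} [NormedAddCommGroup H] [InnerProductSpace ℝ H]
    (D β : ℝ) (K : ℕ) (hD : 0 ≤ D) (hβ : 0 ≤ β) (hK : 1 ≤ K)
    (hcond : 2 * Real.sqrt 2 * β * ((K : ℝ) - 1) ^ ((3 : ℝ) / 2) ≤ 1)
    (ω u : ℕ → H) (ζ : ℕ → ℕ) (R : ℤ → ℝ)
    (hζ : ∀ z : ℕ, 1 ≤ z → ζ z ≤ z - 1)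
    (hζK : ∀ z : ℕ, 1 ≤ z → z - ζ z ≤ K)
    (hu : ∀ z : ℕ, 1 ≤ z → ‖u z - ω (ζ z)‖ ≤ D)
    (hω : ∀ z : ℕ, 1 ≤ z → ω z = (1 - β) • ω (z - 1) + β • u z)
    (hR : ∀ z : ℕ, 1 ≤ z → R z = ‖ω (ζ z) - ω (z - 1)‖ ^ 2)
    (hR0 : ∀ z : ℤ, z ≤ 0 → R z = 0)
    (Z : ℕ) (hZ : 1 ≤ Z) :
    (∑ z ∈ Finset.Icc 1 Z, R (z : ℤ) ≤
        4 * (Z : ℝ) * β ^ 2 * ((K : ℝ) - 1) ^ 2 * D ^ 2) ∧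
      (∑ z ∈ Finset.Icc 1 Z, Real.sqrt (R (z : ℤ)) ≤
        3 * (Z : ℝ) * β * ((K : ℝ) - 1) * D) := by
  set M : ℝ := 2 * β * ((K : ℝ) - 1) * D with hM
  have hK1 : (0 : ℝ) ≤ (K : ℝ) - 1 := by
    have : (1 : ℝ) ≤ K := by exact_mod_cast hK
    linarith
  -- step-size condition implies β(K-1) ≤ 1/2
  have hc : β * ((K : ℝ) - 1) ≤ 1 / 2 := by
    rcases eq_or_lt_of_le hK with h1 | h2
    · rw [← h1]; norm_num
    · have hx : (1 : ℝ) ≤ (K : ℝ) - 1 := by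
        have h2' : (2 : ℕ) ≤ K := h2
        have : (2 : ℝ) ≤ K := by exact_mod_cast h2'
        linarith
      have hpow : ((K : ℝ) - 1) ^ (1 : ℝ) ≤ ((K : ℝ) - 1) ^ ((3 : ℝ) / 2) :=
        Real.rpow_le_rpow_of_exponent_le hx (by norm_num)
      rw [Real.rpow_one] at hpow
      have hs2 : (1 : ℝ) ≤ Real.sqrt 2 := by
        rw [show (1 : ℝ) = Real.sqrt 1 by simp]
        exact Real.sqrt_le_sqrt (by norm_num)
      have hbx : (0 : ℝ) ≤ β * ((K : ℝ) - 1) := mul_nonneg hβ hK1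
      nlinarith [mul_le_mul_of_nonneg_left hpow (mul_nonneg (by positivity : (0:ℝ) ≤ 2 * Real.sqrt 2) hβ)]
  have hM0 : 0 ≤ M := by positivity
  -- key pointwise bound
  have key : ∀ z : ℕ, 1 ≤ z → ‖ω (ζ z) - ω (z - 1)‖ ≤ M := by
    intro z
    induction z using Nat.strong_induction_on with
    | _ z ih =>
      intro hz1
      have hab : ζ z ≤ z - 1 := hζ z hz1
      have htel : ω (z - 1) - ω (ζ z) = ∑ j ∈ Finset.Ico (ζ z) (z - 1), (ω (j + 1) - ω j) :=
        (asyncHFL_tele ω _ _ hab).symm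
      have hstep : ∀ j ∈ Finset.Ico (ζ z) (z - 1), ‖ω (j + 1) - ω j‖ ≤ β * (D + M) := by
        intro j hj
        simp only [Finset.mem_Ico] at hj
        have hdiff : ω (j + 1) - ω j = β • (u (j + 1) - ω j) := by
          rw [hω (j + 1) (by omega)]
          simp only [Nat.add_sub_cancel]
          module
        have hih : ‖ω (ζ (j + 1)) - ω j‖ ≤ M := by
          have h := ih (j + 1) (by omega) (by omega)
          simpa using h
        have hu' : ‖u (j + 1) - ω (ζ (j + 1))‖ ≤ D := hu (j + 1) (by omega)
        have htri : ‖u (j + 1) - ω j‖ ≤ ‖u (j + 1) - ω (ζ (j + 1))‖ + ‖ω (ζ (j + 1)) - ω j‖ := by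
          have := norm_add_le (u (j + 1) - ω (ζ (j + 1))) (ω (ζ (j + 1)) - ω j)
          rwa [sub_add_sub_cancel] at this
        calc ‖ω (j + 1) - ω j‖ = β * ‖u (j + 1) - ω j‖ := by
              rw [hdiff, norm_smul, Real.norm_of_nonneg hβ]
          _ ≤ β * (D + M) := by
              apply mul_le_mul_of_nonneg_left _ hβ
              linarith
      have hcard : ((z - 1 - ζ z : ℕ) : ℝ) ≤ (K : ℝ) - 1 := by
        have h1 : z - 1 - ζ z ≤ K - 1 := by
          have := hζK z hz1; omega
        have h2 : ((z - 1 - ζ z : ℕ) : ℝ) ≤ ((K - 1 : ℕ) : ℝ) := by exact_mod_cast h1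
        rwa [Nat.cast_sub hK, Nat.cast_one] at h2
      calc ‖ω (ζ z) - ω (z - 1)‖ = ‖ω (z - 1) - ω (ζ z)‖ := norm_sub_rev _ _
        _ ≤ ∑ j ∈ Finset.Ico (ζ z) (z - 1), ‖ω (j + 1) - ω j‖ := by
              rw [htel]; exact norm_sum_le _ _
        _ ≤ ∑ _j ∈ Finset.Ico (ζ z) (z - 1), (β * (D + M)) := Finset.sum_le_sum hstep
        _ = ((z - 1 - ζ z : ℕ) : ℝ) * (β * (D + M)) := by
              rw [Finset.sum_const, Nat.card_Ico, nsmul_eq_mul]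
        _ ≤ ((K : ℝ) - 1) * (β * (D + M)) := by
              apply mul_le_mul_of_nonneg_right hcard (by positivity)
        _ ≤ M := by
              rw [hM]
              nlinarith [mul_nonneg (mul_nonneg hβ hK1) hD, hc, hK1, hβ, hD]
  have hRb : ∀ z ∈ Finset.Icc 1 Z, R (z : ℤ) ≤ M ^ 2 := by
    intro z hz
    simp only [Finset.mem_Icc] at hz
    rw [hR z hz.1]
    exact pow_le_pow_left₀ (norm_nonneg _) (key z hz.1) 2
  have hSb : ∀ z ∈ Finset.Icc 1 Z, Real.sqrt (R (z : ℤ)) ≤ M := by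
    intro z hz
    simp only [Finset.mem_Icc] at hz
    rw [hR z hz.1, Real.sqrt_sq (norm_nonneg _)]
    exact key z hz.1
  have hcardZ : (Finset.Icc 1 Z).card = Z := by
    rw [Nat.card_Icc]; omega
  constructor
  · calc ∑ z ∈ Finset.Icc 1 Z, R (z : ℤ) ≤ ∑ _z ∈ Finset.Icc 1 Z, M ^ 2 :=
          Finset.sum_le_sum hRb
      _ = (Z : ℝ) * M ^ 2 := by rw [Finset.sum_const, hcardZ, nsmul_eq_mul]
      _ = 4 * (Z : ℝ) * β ^ 2 * ((K : ℝ) - 1) ^ 2 * D ^ 2 := by rw [hM]; ring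
  · calc ∑ z ∈ Finset.Icc 1 Z, Real.sqrt (R (z : ℤ)) ≤ ∑ _z ∈ Finset.Icc 1 Z, M :=
          Finset.sum_le_sum hSb
      _ = (Z : ℝ) * M := by rw [Finset.sum_const, hcardZ, nsmul_eq_mul]
      _ ≤ 3 * (Z : ℝ) * β * ((K : ℝ) - 1) * D := by
          rw [hM]
          have : (0 : ℝ) ≤ (Z : ℝ) * (β * (((K : ℝ) - 1) * D)) := by positivity
          nlinarith
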